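/- In the Borel subalgebra U(B₀), for sequences α of length n and β of length p, [h_ℓ(α), x_m^-(β)] = -2 x_{ℓ+m}^-(αβ) holds for all ℓ ≥ n and m > p, and [h_ℓ(α), x_m^+(β)] = 2 x_{ℓ+m}^+(αβ) for all ℓ ≥ n, m ≥ p. -/

import Mathlib

open scoped BigOperators

/-- A representation of the Borel subalgebra `U(B₀)` of the `sl₂` loop algebra:
operators `x_k^+, h_k` (`k ≥ 0`) and `x_k^-` (`k ≥ 1`, the value of `xm` at `0`
being irrelevant) on a complex vector space, satisfying the loop relations. -/
structure BorelRep (V : Type*) [AddCommGroup V] [Module ℂ V] where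
  xp : ℕ → Module.End ℂ V
  xm : ℕ → Module.End ℂ V
  h : ℕ → Module.End ℂ V
  h_xp : ∀ j k, ⁅h j, xp k⁆ = 2 • xp (j + k)
  h_xm : ∀ j k, 1 ≤ k → ⁅h j, xm k⁆ = -(2 • xm (j + k))
  xp_xm : ∀ j k, 1 ≤ k → ⁅xp j, xm k⁆ = h (j + k)
  h_h : ∀ j k, ⁅h j, h k⁆ = 0
  xp_xp : ∀ j k, ⁅xp j, xp k⁆ = 0
  xm_xm : ∀ j k, 1 ≤ j → 1 ≤ k → ⁅xm j, xm k⁆ = 0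

/-- The `k`-th elementary symmetric polynomial of `α_1, …, α_n`. -/
noncomputable def esymm {n : ℕ} (α : Fin n → ℂ) (k : ℕ) : ℂ :=
  ∑ s ∈ Finset.powersetCard k (Finset.univ : Finset (Fin n)), ∏ i ∈ s, α i

section Aux
open Polynomial

lemma esymm_eq_zero {n : ℕ} (α : Fin n → ℂ) {k : ℕ} (h : n < k) : esymm α k = 0 := by
  unfold esymm
  rw [Finset.powersetCard_eq_empty.2 (by simpa using h), Finset.sum_empty]

private lemma alg (N : ℕ) (S T : ℕ → ℂ) (b : ℂ) (hS : S (N+1) = 0) (hT0 : T 0 = S 0)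
    (hTs : ∀ k, T (k+1) = S (k+1) + b * S k) :
    (1 - C b * X) * ∑ k ∈ Finset.range (N+1), C ((-1)^k * S k) * X^k
      = ∑ k ∈ Finset.range (N+2), C ((-1)^k * T k) * X^k := by
  have h1 : ∑ k ∈ Finset.range (N+2), C ((-1)^k * T k) * X^k
      = ∑ k ∈ Finset.range (N+1),
          (C ((-1)^(k+1) * S (k+1)) * X^(k+1) - C b * X * (C ((-1)^k * S k) * X^k))
        + C ((-1)^0 * T 0) * X^0 := by
    rw [Finset.sum_range_succ' (fun k => C ((-1)^k * T k) * X^k)]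
    congr 1
    refine Finset.sum_congr rfl fun k _ => ?_
    rw [hTs]
    simp only [map_mul, map_add, map_neg, map_pow, map_one]
    ring
  have h2 : (∑ k ∈ Finset.range (N+1), C ((-1)^(k+1) * S (k+1)) * X^(k+1))
        + C ((-1)^0 * S 0) * X^0
      = ∑ k ∈ Finset.range (N+1), C ((-1)^k * S k) * X^k := by
    rw [← Finset.sum_range_succ' (fun k => C ((-1)^k * S k) * X^k) (N+1),
      Finset.sum_range_succ]
    simp [hS]
  rw [h1, Finset.sum_sub_distrib, hT0, sub_mul, one_mul, Finset.mul_sum, ← h2]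
  ring

/-- generating polynomial identity over a general finset -/
lemma genP {σ : Type*} [DecidableEq σ] (f : σ → ℂ) (s : Finset σ) :
    ∏ i ∈ s, (1 - C (f i) * X) =
      ∑ k ∈ Finset.range (s.card + 1),
        C ((-1) ^ k * ∑ t ∈ s.powersetCard k, ∏ i ∈ t, f i) * X ^ k := by
  classical
  induction s using Finset.induction_on with
  | empty => simp
  | @insert a s ha ih =>
    have hEins : ∀ k : ℕ,
        (∑ t ∈ (insert a s).powersetCard (k + 1), ∏ i ∈ t, f i)
          = (∑ t ∈ s.powersetCard (k + 1), ∏ i ∈ t, f i)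
            + f a * ∑ t ∈ s.powersetCard k, ∏ i ∈ t, f i := by
      intro k
      rw [Finset.powersetCard_succ_insert ha, Finset.sum_union, Finset.sum_image]
      · congr 1
        rw [Finset.mul_sum]
        refine Finset.sum_congr rfl fun t ht => ?_
        have hat : a ∉ t := fun hc => ha ((Finset.mem_powersetCard.1 ht).1 hc)
        rw [Finset.prod_insert hat]
      · intro t ht u hu htu
        have hat : a ∉ t := fun hc => ha ((Finset.mem_powersetCard.1 ht).1 hc)
        have hau : a ∉ u := fun hc => ha ((Finset.mem_powersetCard.1 hu).1 hc)
        have := congrArg (Finset.erase · a) htu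
        simpa [Finset.erase_insert, hat, hau] using this
      · rw [Finset.disjoint_right]
        rintro t ht hts
        obtain ⟨u, hu, rfl⟩ := Finset.mem_image.1 ht
        exact ((Finset.mem_powersetCard.1 hts).1 (Finset.mem_insert_self a u) |> ha)
    rw [Finset.prod_insert ha, ih, Finset.card_insert_of_notMem ha]
    exact alg s.card _ _ (f a)
      (by rw [Finset.powersetCard_eq_empty.2 (by omega)]; simp)
      (by simp) hEins

noncomputable def gp {n : ℕ} (α : Fin n → ℂ) : Polynomial ℂ :=
  ∏ i, (1 - C (α i) * X)

lemma gp_coeff {n : ℕ} (α : Fin n → ℂ) (r : ℕ) :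
    (gp α).coeff r = (-1) ^ r * esymm α r := by
  have h := genP α (Finset.univ : Finset (Fin n))
  rw [show ((Finset.univ : Finset (Fin n)).card) = n by simp] at h
  have he : ∀ k, (∑ t ∈ Finset.powersetCard k (Finset.univ : Finset (Fin n)), ∏ i ∈ t, α i)
      = esymm α k := fun _ => rfl
  simp only [he] at h
  rw [gp, h, Polynomial.finset_sum_coeff]
  simp only [Polynomial.coeff_C_mul, Polynomial.coeff_X_pow, mul_ite, mul_one, mul_zero]
  rw [Finset.sum_ite_eq (Finset.range (n+1)) r]
  by_cases hr : r ∈ Finset.range (n+1)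
  · simp [hr]
  · have hn : n < r := by simpa [Finset.mem_range, Nat.lt_succ_iff, not_le] using hr
    rw [if_neg hr, esymm_eq_zero α hn, mul_zero]

lemma conv {n p : ℕ} (α : Fin n → ℂ) (β : Fin p → ℂ) (r : ℕ) :
    (-1:ℂ)^r * esymm (Fin.append α β) r
      = ∑ x ∈ Finset.HasAntidiagonal.antidiagonal r,
          ((-1:ℂ)^x.1 * esymm α x.1) * ((-1:ℂ)^x.2 * esymm β x.2) := by
  have hmul : gp (Fin.append α β) = gp α * gp β := by
    simp [gp, Fin.prod_univ_add, Fin.append_left, Fin.append_right]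
  rw [← gp_coeff, hmul, Polynomial.coeff_mul]
  simp [gp_coeff]

lemma key {M : Type*} [AddCommGroup M] [Module ℂ M] {n p : ℕ}
    (α : Fin n → ℂ) (β : Fin p → ℂ) (G : ℕ → M) :
    ∑ j ∈ Finset.range (n+1), ∑ k ∈ Finset.range (p+1),
        (((-1:ℂ)^j * esymm α j) * ((-1:ℂ)^k * esymm β k)) • G (j+k)
      = ∑ r ∈ Finset.range (n+p+1), ((-1:ℂ)^r * esymm (Fin.append α β) r) • G r := by
  set F : ℕ × ℕ → M := fun x =>
    (((-1:ℂ)^x.1 * esymm α x.1) * ((-1:ℂ)^x.2 * esymm β x.2)) • G (x.1+x.2) with hFdef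
  have hF : ∀ x : ℕ × ℕ, n < x.1 ∨ p < x.2 → F x = 0 := by
    rintro x (hx | hx)
    · simp [hFdef, esymm_eq_zero α hx]
    · simp [hFdef, esymm_eq_zero β hx]
  have hRHS : ∑ r ∈ Finset.range (n+p+1), ((-1:ℂ)^r * esymm (Fin.append α β) r) • G r
      = ∑ r ∈ Finset.range (n+p+1), ∑ x ∈ Finset.HasAntidiagonal.antidiagonal r, F x := by
    refine Finset.sum_congr rfl fun r _ => ?_
    rw [conv, Finset.sum_smul]
    refine Finset.sum_congr rfl fun x hx => ?_
    rw [hFdef]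
    simp only
    rw [Finset.HasAntidiagonal.mem_antidiagonal.1 hx]
  have hdisj : (↑(Finset.range (n+p+1)) : Set ℕ).PairwiseDisjoint Finset.HasAntidiagonal.antidiagonal := by
    intro r _ r' _ hrr'
    simp only [Function.onFun]
    rw [Finset.disjoint_left]
    intro x hx hx'
    exact hrr' ((Finset.HasAntidiagonal.mem_antidiagonal.1 hx).symm.trans (Finset.HasAntidiagonal.mem_antidiagonal.1 hx'))
  have hset : (Finset.range (n+p+1)).biUnion Finset.HasAntidiagonal.antidiagonal
      = (Finset.range (n+p+1) ×ˢ Finset.range (n+p+1)).filter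
          (fun x => x.1 + x.2 ≤ n + p) := by
    ext ⟨a, b⟩
    simp only [Finset.mem_biUnion, Finset.HasAntidiagonal.mem_antidiagonal, Finset.mem_filter,
      Finset.mem_product, Finset.mem_range]
    constructor
    · rintro ⟨r, hr, rfl⟩; omega
    · rintro ⟨⟨_, _⟩, h⟩; exact ⟨a + b, by omega, rfl⟩
  have hbig : ∀ (s : Finset (ℕ × ℕ)),
      s ⊆ Finset.range (n+p+1) ×ˢ Finset.range (n+p+1) →
      (∀ x ∈ Finset.range (n+p+1) ×ˢ Finset.range (n+p+1), x ∉ s → F x = 0) →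
      ∑ x ∈ s, F x = ∑ x ∈ Finset.range (n+p+1) ×ˢ Finset.range (n+p+1), F x :=
    fun s hs hz => Finset.sum_subset hs hz
  rw [hRHS, ← Finset.sum_biUnion hdisj, hset]
  rw [← Finset.sum_product' (s := Finset.range (n+1)) (t := Finset.range (p+1))
    (f := fun j k => (((-1:ℂ)^j * esymm α j) * ((-1:ℂ)^k * esymm β k)) • G (j+k))]
  have h1 : ∑ x ∈ Finset.range (n+1) ×ˢ Finset.range (p+1), F x
      = ∑ x ∈ Finset.range (n+p+1) ×ˢ Finset.range (n+p+1), F x := by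
    refine hbig _ ?_ ?_
    · intro x hx
      simp only [Finset.mem_product, Finset.mem_range] at hx ⊢
      omega
    · intro x _ hx
      refine hF x ?_
      simp only [Finset.mem_product, Finset.mem_range] at hx
      omega
  have h2 : ∑ x ∈ (Finset.range (n+p+1) ×ˢ Finset.range (n+p+1)).filter
        (fun x => x.1 + x.2 ≤ n + p), F x
      = ∑ x ∈ Finset.range (n+p+1) ×ˢ Finset.range (n+p+1), F x := by
    refine hbig _ (Finset.filter_subset _ _) ?_
    intro x hx hx'
    refine hF x ?_
    simp only [Finset.mem_filter, Finset.mem_product, Finset.mem_range, not_and, not_le] at hx hx'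
    have := hx' hx
    omega
  rw [h1, ← h2]

lemma sum_lie' {A : Type*} [Ring A] {ι : Type*} (s : Finset ι) (f : ι → A) (y : A) :
    ⁅∑ i ∈ s, f i, y⁆ = ∑ i ∈ s, ⁅f i, y⁆ := by
  simp [Ring.lie_def, Finset.sum_mul, Finset.mul_sum, Finset.sum_sub_distrib]

lemma lie_sum' {A : Type*} [Ring A] {ι : Type*} (s : Finset ι) (f : ι → A) (y : A) :
    ⁅y, ∑ i ∈ s, f i⁆ = ∑ i ∈ s, ⁅y, f i⁆ := by
  simp [Ring.lie_def, Finset.sum_mul, Finset.mul_sum, Finset.sum_sub_distrib]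

end Aux

variable {V : Type*} [AddCommGroup V] [Module ℂ V]

/-- `x_m^+(α) = Σ_{k=0}^n (-1)^k e_k(α) x_{m-k}^+`. -/
noncomputable def xpP (B : BorelRep V) {n : ℕ} (α : Fin n → ℂ) (m : ℕ) :
    Module.End ℂ V :=
  ∑ k ∈ Finset.range (n + 1), ((-1 : ℂ) ^ k * esymm α k) • B.xp (m - k)

/-- `x_m^-(α) = Σ_{k=0}^n (-1)^k e_k(α) x_{m-k}^-`. -/
noncomputable def xmP (B : BorelRep V) {n : ℕ} (α : Fin n → ℂ) (m : ℕ) :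
    Module.End ℂ V :=
  ∑ k ∈ Finset.range (n + 1), ((-1 : ℂ) ^ k * esymm α k) • B.xm (m - k)

/-- `h_m(α) = Σ_{k=0}^n (-1)^k e_k(α) h_{m-k}`. -/
noncomputable def hP (B : BorelRep V) {n : ℕ} (α : Fin n → ℂ) (m : ℕ) :
    Module.End ℂ V :=
  ∑ k ∈ Finset.range (n + 1), ((-1 : ℂ) ^ k * esymm α k) • B.h (m - k)

/-- The cyclic submodule `U(B₀)Ψ`: the span of all vectors obtained from `Ψ`
by words in the generators. -/
def cyclic (B : BorelRep V) (Ψ : V) : Submodule ℂ V :=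
  Submodule.span ℂ {v | ∃ w : List (Module.End ℂ V),
    (∀ f ∈ w, (∃ k, f = B.xp k) ∨ (∃ k, 1 ≤ k ∧ f = B.xm k) ∨ (∃ k, f = B.h k)) ∧
    v = w.prod Ψ}

/-- In `U(B₀)`: `[h_ℓ(α), x_m^-(β)] = -2 x_{ℓ+m}^-(αβ)` for `ℓ ≥ n`, `m > p`,
and `[h_ℓ(α), x_m^+(β)] = 2 x_{ℓ+m}^+(αβ)` for `ℓ ≥ n`, `m ≥ p`. -/
theorem stmt4 (B : BorelRep V) {n p : ℕ} (α : Fin n → ℂ) (β : Fin p → ℂ) :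
    (∀ ℓ m : ℕ, n ≤ ℓ → p < m →
      ⁅hP B α ℓ, xmP B β m⁆ = -(2 • xmP B (Fin.append α β) (ℓ + m))) ∧
    (∀ ℓ m : ℕ, n ≤ ℓ → p ≤ m →
      ⁅hP B α ℓ, xpP B β m⁆ = 2 • xpP B (Fin.append α β) (ℓ + m)) := by
  constructor
  · intro ℓ m hℓ hm
    have hstep : ⁅hP B α ℓ, xmP B β m⁆
        = ∑ j ∈ Finset.range (n+1), ∑ k ∈ Finset.range (p+1),
            (((-1:ℂ)^j * esymm α j) * ((-1:ℂ)^k * esymm β k)) •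
              (-((2:ℕ) • B.xm (ℓ + m - (j + k)))) := by
      rw [hP, xmP, sum_lie']
      refine Finset.sum_congr rfl fun j hj => ?_
      rw [lie_sum']
      refine Finset.sum_congr rfl fun k hk => ?_
      have hj' : j ≤ n := by simpa [Nat.lt_succ_iff] using Finset.mem_range.1 hj
      have hk' : k ≤ p := by simpa [Nat.lt_succ_iff] using Finset.mem_range.1 hk
      have hidx : ℓ - j + (m - k) = ℓ + m - (j + k) := by omega
      rw [show ⁅((-1:ℂ) ^ j * esymm α j) • B.h (ℓ - j), ((-1:ℂ) ^ k * esymm β k) • B.xm (m - k)⁆ = ((-1:ℂ) ^ j * esymm α j * ((-1:ℂ) ^ k * esymm β k)) • ⁅B.h (ℓ - j), B.xm (m - k)⁆ by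
          simp only [Ring.lie_def, smul_mul_smul_comm, smul_sub]; rw [mul_comm ((-1:ℂ) ^ k * esymm β k)],
        B.h_xm (ℓ - j) (m - k) (by omega), hidx]
    rw [hstep, key α β (fun s => -((2:ℕ) • B.xm (ℓ + m - s))), xmP,
      Finset.smul_sum, ← Finset.sum_neg_distrib]
    refine Finset.sum_congr rfl fun r _ => ?_
    rw [smul_neg, smul_comm]
  · intro ℓ m hℓ hm
    have hstep : ⁅hP B α ℓ, xpP B β m⁆
        = ∑ j ∈ Finset.range (n+1), ∑ k ∈ Finset.range (p+1),
            (((-1:ℂ)^j * esymm α j) * ((-1:ℂ)^k * esymm β k)) •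
              ((2:ℕ) • B.xp (ℓ + m - (j + k))) := by
      rw [hP, xpP, sum_lie']
      refine Finset.sum_congr rfl fun j hj => ?_
      rw [lie_sum']
      refine Finset.sum_congr rfl fun k hk => ?_
      have hj' : j ≤ n := by simpa [Nat.lt_succ_iff] using Finset.mem_range.1 hj
      have hk' : k ≤ p := by simpa [Nat.lt_succ_iff] using Finset.mem_range.1 hk
      have hidx : ℓ - j + (m - k) = ℓ + m - (j + k) := by omega
      rw [show ⁅((-1:ℂ) ^ j * esymm α j) • B.h (ℓ - j), ((-1:ℂ) ^ k * esymm β k) • B.xp (m - k)⁆ = ((-1:ℂ) ^ j * esymm α j * ((-1:ℂ) ^ k * esymm β k)) • ⁅B.h (ℓ - j), B.xp (m - k)⁆ by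
          simp only [Ring.lie_def, smul_mul_smul_comm, smul_sub]; rw [mul_comm ((-1:ℂ) ^ k * esymm β k)],
        B.h_xp (ℓ - j) (m - k), hidx]
    rw [hstep, key α β (fun s => (2:ℕ) • B.xp (ℓ + m - s)), xpP, Finset.smul_sum]
    refine Finset.sum_congr rfl fun r _ => ?_
    rw [smul_comm]
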